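/- Let S be a recursively enumerable set of nonempty lists of natural numbers, and suppose Set.univ is finitely presented in V(S), i.e., there exists a finite set A with C(↑A) = Set.univ. Then there exists a single computable function g : ℕ × ℕ → Option (Finset ℕ) such that for every maximal element X of V(S) with X ≠ Set.univ, we have Xᶜ ≤ₑ^g X. -/

import Mathlib

/-- A set `X ⊆ ℕ` satisfies the Horn implications encoded by `S`:
a list `n₀ :: t ∈ S` means `(∀ m ∈ t, m ∈ X) → n₀ ∈ X`. -/
def SatisfiesHorn (S : Set (List ℕ)) (X : Set ℕ) : Prop :=
  ∀ n₀ : ℕ, ∀ t : List ℕ, (n₀ :: t) ∈ S → (∀ m ∈ t, m ∈ X) → n₀ ∈ X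

/-- The quasivariety defined by `S`. -/
def QV (S : Set (List ℕ)) : Set (Set ℕ) := {X | SatisfiesHorn S X}

/-- The closure of `Y`: the smallest element of `QV S` containing `Y`. -/
def QVclosure (S : Set (List ℕ)) (Y : Set ℕ) : Set ℕ :=
  ⋂₀ {X | X ∈ QV S ∧ Y ⊆ X}

/-- `A` is enumeration reducible to `B` via `f`. -/
def EnumRedVia (A B : Set ℕ) (f : ℕ × ℕ → Option (Finset ℕ)) : Prop :=
  Computable f ∧
    ∀ x : ℕ, x ∈ A ↔ ∃ n : ℕ, ∃ F : Finset ℕ, f (x, n) = some F ∧ ↑F ⊆ B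

/-- `A` is enumeration reducible to `B`. -/
def EnumRed (A B : Set ℕ) : Prop := ∃ f : ℕ × ℕ → Option (Finset ℕ), EnumRedVia A B f

/-- `X` is a maximal element of the quasivariety `QV S`. -/
def QVMaximal (S : Set (List ℕ)) (X : Set ℕ) : Prop :=
  X ∈ QV S ∧ ∀ Z ∈ QV S, X ⊆ Z → Z = X ∨ Z = Set.univ

namespace UQV

/-- boolean membership in a list -/
def memB (a : ℕ) (E : List ℕ) : Bool := E.foldr (fun b r => decide (a = b) || r) false

lemma memB_iff {a : ℕ} {E : List ℕ} : memB a E = true ↔ a ∈ E := by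
  induction E with
  | nil => simp [memB]
  | cons b t ih => simp [memB] at ih ⊢; tauto

/-- boolean sublist test -/
def subB (t E : List ℕ) : Bool := t.foldr (fun a r => memB a E && r) true

lemma subB_iff {t E : List ℕ} : subB t E = true ↔ ∀ a ∈ t, a ∈ E := by
  induction t with
  | nil => simp [subB]
  | cons a s ih => simp [subB, memB_iff] at ih ⊢; tauto

/-- heads derivable from `E` by one rule -/
def ruleHead (E l : List ℕ) : List ℕ :=
  List.casesOn l [] fun n t => bif subB t E then [n] else []

lemma mem_ruleHead {m : ℕ} {E l : List ℕ} :
    m ∈ ruleHead E l ↔ ∃ t, l = m :: t ∧ ∀ a ∈ t, a ∈ E := by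
  cases l with
  | nil => simp [ruleHead]
  | cons n t =>
    simp only [ruleHead]
    cases h : subB t E with
    | false =>
      simp only [cond_false, List.not_mem_nil, false_iff]
      rintro ⟨t', ht', hsub⟩
      obtain ⟨rfl, rfl⟩ : n = m ∧ t = t' := by simpa using ht'
      simp [subB_iff.2 hsub] at h
    | true =>
      simp only [cond_true, List.mem_singleton]
      constructor
      · rintro rfl; exact ⟨t, rfl, subB_iff.1 h⟩
      · rintro ⟨t', ht', _⟩; exact ((by simpa using ht' : n = m ∧ t = t')).1.symm

/-- one parallel step of Horn rules from `L` -/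
def stepL (L : List (List ℕ)) (E : List ℕ) : List ℕ :=
  E ++ L.flatMap (ruleHead E)

lemma mem_stepL {m : ℕ} {L : List (List ℕ)} {E : List ℕ} :
    m ∈ stepL L E ↔ m ∈ E ∨ ∃ t, (m :: t) ∈ L ∧ ∀ a ∈ t, a ∈ E := by
  simp only [stepL, List.mem_append, List.mem_flatMap, mem_ruleHead]
  constructor
  · rintro (h | ⟨l, hl, t, rfl, ht⟩)
    · exact Or.inl h
    · exact Or.inr ⟨t, hl, ht⟩
  · rintro (h | ⟨t, hl, ht⟩)
    · exact Or.inl h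
    · exact Or.inr ⟨m :: t, hl, t, rfl, ht⟩

/-- `k`-fold iteration of `stepL L` -/
def iterL (L : List (List ℕ)) (k : ℕ) (E : List ℕ) : List ℕ :=
  Nat.rec E (fun _ ih => stepL L ih) k

@[simp] lemma iterL_zero {L E} : iterL L 0 E = E := rfl
@[simp] lemma iterL_succ {L k E} : iterL L (k + 1) E = stepL L (iterL L k E) := rfl

lemma subset_stepL {L : List (List ℕ)} {E : List ℕ} : ∀ m ∈ E, m ∈ stepL L E := fun m hm =>
  mem_stepL.2 (Or.inl hm)

lemma stepL_mono' {L L' : List (List ℕ)} {E E' : List ℕ} (hL : ∀ l ∈ L, l ∈ L')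
    (hE : ∀ m ∈ E, m ∈ E') : ∀ m ∈ stepL L E, m ∈ stepL L' E' := by
  intro m hm
  rcases mem_stepL.1 hm with h | ⟨t, hl, ht⟩
  · exact mem_stepL.2 (Or.inl (hE _ h))
  · exact mem_stepL.2 (Or.inr ⟨t, hL _ hl, fun a ha => hE _ (ht a ha)⟩)

lemma iterL_mono_LE {L L' : List (List ℕ)} {E E' : List ℕ} (hL : ∀ l ∈ L, l ∈ L')
    (hE : ∀ m ∈ E, m ∈ E') : ∀ k, ∀ m ∈ iterL L k E, m ∈ iterL L' k E' := by
  intro k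
  induction k with
  | zero => simpa using hE
  | succ k ih => simpa using stepL_mono' hL ih

lemma iterL_mono_k {L : List (List ℕ)} {E : List ℕ} {k k' : ℕ} (h : k ≤ k') :
    ∀ m ∈ iterL L k E, m ∈ iterL L k' E := by
  induction h with
  | refl => exact fun m hm => hm
  | step _ ih => exact fun m hm => subset_stepL m (ih m hm)

lemma iterL_mono {L L' : List (List ℕ)} {E E' : List ℕ} {k k' : ℕ} (hk : k ≤ k')
    (hL : ∀ l ∈ L, l ∈ L') (hE : ∀ m ∈ E, m ∈ E') :
    ∀ m ∈ iterL L k E, m ∈ iterL L' k' E' := fun m hm =>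
  iterL_mono_k hk m (iterL_mono_LE hL hE k m hm)

/-- soundness of iteration against any model X -/
lemma iterL_sound {S : Set (List ℕ)} {X : Set ℕ} (hX : SatisfiesHorn S X)
    {L : List (List ℕ)} (hL : ∀ l ∈ L, l ∈ S) {E : List ℕ} (hE : ∀ m ∈ E, m ∈ X) :
    ∀ k, ∀ m ∈ iterL L k E, m ∈ X := by
  intro k
  induction k with
  | zero => simpa using hE
  | succ k ih =>
    intro m hm
    rcases mem_stepL.1 hm with h | ⟨t, hl, ht⟩
    · exact ih m h
    · exact hX m t (hL _ hl) fun a ha => ih a (ht a ha)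

/-- derivability from `Y` using rules of `S` -/
inductive Deriv (S : Set (List ℕ)) (Y : Set ℕ) : ℕ → Prop
  | base {n : ℕ} : n ∈ Y → Deriv S Y n
  | step {n : ℕ} {t : List ℕ} : (n :: t) ∈ S → (∀ m ∈ t, Deriv S Y m) → Deriv S Y n

lemma closure_subset_deriv {S : Set (List ℕ)} {Y : Set ℕ} :
    QVclosure S Y ⊆ {n | Deriv S Y n} :=
  Set.sInter_subset_of_mem ⟨fun n₀ t hs h => Deriv.step hs h, fun n hn => Deriv.base hn⟩

lemma mem_QVclosure_self {S : Set (List ℕ)} {Y : Set ℕ} : Y ⊆ QVclosure S Y := fun y hy =>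
  Set.mem_sInter.2 fun _ hX => hX.2 hy

lemma QVclosure_mem {S : Set (List ℕ)} {Y : Set ℕ} : QVclosure S Y ∈ QV S := by
  intro n₀ t hs h
  exact Set.mem_sInter.2 fun X hX => hX.1 n₀ t hs fun m hm => Set.mem_sInter.1 (h m hm) X hX

lemma QVclosure_le {S : Set (List ℕ)} {Y X : Set ℕ} (hX : X ∈ QV S) (hYX : Y ⊆ X) :
    QVclosure S Y ⊆ X :=
  Set.sInter_subset_of_mem ⟨hX, hYX⟩

/-- combining certificates over a list -/
lemma certs_combine {S : Set (List ℕ)} {Y : Set ℕ} :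
    ∀ T : List ℕ,
      (∀ a ∈ T, ∃ E L k, (∀ m ∈ E, m ∈ Y) ∧ (∀ l ∈ L, l ∈ S) ∧ a ∈ iterL L k E) →
      ∃ E L k, (∀ m ∈ E, m ∈ Y) ∧ (∀ l ∈ L, l ∈ S) ∧ ∀ a ∈ T, a ∈ iterL L k E := by
  intro T
  induction T with
  | nil => exact fun _ => ⟨[], [], 0, by simp, by simp, by simp⟩
  | cons a T iht =>
    intro h
    obtain ⟨E₁, L₁, k₁, hE₁, hL₁, hm₁⟩ := h a (by simp)
    obtain ⟨E₂, L₂, k₂, hE₂, hL₂, hm₂⟩ := iht fun x hx => h x (by simp [hx])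
    refine ⟨E₁ ++ E₂, L₁ ++ L₂, max k₁ k₂, ?_, ?_, ?_⟩
    · intro x hx; rcases List.mem_append.1 hx with h | h
      · exact hE₁ _ h
      · exact hE₂ _ h
    · intro l hl; rcases List.mem_append.1 hl with h | h
      · exact hL₁ _ h
      · exact hL₂ _ h
    · intro x hx
      rcases List.mem_cons.1 hx with rfl | hx
      · exact iterL_mono (le_max_left _ _) (fun l hl => List.mem_append.2 (Or.inl hl))
          (fun y hy => List.mem_append.2 (Or.inl hy)) _ hm₁
      · exact iterL_mono (le_max_right _ _) (fun l hl => List.mem_append.2 (Or.inr hl))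
          (fun y hy => List.mem_append.2 (Or.inr hy)) _ (hm₂ x hx)

/-- certificates for a single derivable element -/
lemma deriv_cert {S : Set (List ℕ)} {Y : Set ℕ} {a : ℕ} (h : Deriv S Y a) :
    ∃ E L k, (∀ m ∈ E, m ∈ Y) ∧ (∀ l ∈ L, l ∈ S) ∧ a ∈ iterL L k E := by
  induction h with
  | base h => exact ⟨[_], [], 0, by simpa, by simp, by simp⟩
  | @step n t hs _ ih =>
    obtain ⟨E, L, k, hE, hL, ht⟩ := certs_combine t ih
    refine ⟨E, (n :: t) :: L, k + 1, hE, ?_, ?_⟩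
    · intro l hl; rcases List.mem_cons.1 hl with rfl | h
      · exact hs
      · exact hL _ h
    · rw [iterL_succ]
      refine mem_stepL.2 (Or.inr ⟨t, by simp, fun a ha => ?_⟩)
      exact iterL_mono le_rfl (fun l hl => by simp [hl]) (fun y hy => hy) _ (ht a ha)

/-- certificates for a list of derivable elements -/
lemma derivs_cert {S : Set (List ℕ)} {Y : Set ℕ} (T : List ℕ) (h : ∀ a ∈ T, Deriv S Y a) :
    ∃ E L k, (∀ m ∈ E, m ∈ Y) ∧ (∀ l ∈ L, l ∈ S) ∧ ∀ a ∈ T, a ∈ iterL L k E :=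
  certs_combine T fun a ha => deriv_cert (h a ha)

end UQV

namespace UQV
open Encodable Denumerable Nat.Partrec

/-- encode w.r.t. the `Primcodable` instance -/
def encP {α : Type*} [Primcodable α] (a : α) : ℕ := encode a

/-- decode w.r.t. the `Primcodable` instance -/
def decP (α : Type*) [Primcodable α] (n : ℕ) : Option α := decode n

lemma decP_encP {α : Type*} [Primcodable α] (a : α) : decP α (encP a) = some a := encodek a

/-- membership check via `evaln` for all rules in `L`, with bound `k` -/
def evalnOk (c : Code) (k : ℕ) (L : List (List ℕ)) : Bool :=
  L.foldr (fun l r => (Code.evaln k c (encP l)).isSome && r) true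

lemma evalnOk_iff {c k L} :
    evalnOk c k L = true ↔ ∀ l ∈ L, (Code.evaln k c (encP l)).isSome := by
  induction L with
  | nil => simp [evalnOk]
  | cons l L ih => simp [evalnOk] at ih ⊢; tauto

lemma code_spec {S : Set (List ℕ)} (hS : REPred (· ∈ S)) :
    ∃ c : Code, ∀ l : List ℕ, l ∈ S ↔ ∃ k, (Code.evaln k c (encP l)).isSome := by
  obtain ⟨c, hc⟩ := Code.exists_code.1 hS
  refine ⟨c, fun l => ?_⟩
  have hdom : (Code.eval c (encP l)).Dom ↔ l ∈ S := by
    rw [hc]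
    simp [encP, Part.dom_iff_mem, Part.bind, encodek, Part.assert]
  rw [← hdom, Part.dom_iff_mem]
  constructor
  · rintro ⟨v, hv⟩
    obtain ⟨k, hk⟩ := Code.evaln_complete.1 hv
    exact ⟨k, Option.isSome_iff_exists.2 ⟨v, hk⟩⟩
  · rintro ⟨k, hk⟩
    obtain ⟨v, hv⟩ := Option.isSome_iff_exists.1 hk
    exact ⟨v, Code.evaln_complete.2 ⟨k, hv⟩⟩

lemma evalnOk_mono {c} {k k' : ℕ} (h : k ≤ k') {L} (hL : evalnOk c k L = true) :
    evalnOk c k' L = true := by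
  rw [evalnOk_iff] at hL ⊢
  intro l hl
  obtain ⟨v, hv⟩ := Option.isSome_iff_exists.1 (hL l hl)
  exact Option.isSome_iff_exists.2 ⟨v, Code.evaln_mono h hv⟩

lemma evalnOk_exists {S : Set (List ℕ)} {c : Code}
    (hc : ∀ l : List ℕ, l ∈ S ↔ ∃ k, (Code.evaln k c (encP l)).isSome)
    {L : List (List ℕ)} (hL : ∀ l ∈ L, l ∈ S) : ∃ k, evalnOk c k L = true := by
  induction L with
  | nil => exact ⟨0, by simp [evalnOk]⟩
  | cons l L ih =>
    obtain ⟨k₁, hk₁⟩ := (hc l).1 (hL l (by simp))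
    obtain ⟨k₂, hk₂⟩ := ih fun x hx => hL x (by simp [hx])
    refine ⟨max k₁ k₂, ?_⟩
    rw [evalnOk_iff]
    intro x hx
    rcases List.mem_cons.1 hx with rfl | hx
    · obtain ⟨v, hv⟩ := Option.isSome_iff_exists.1 hk₁
      exact Option.isSome_iff_exists.2 ⟨v, Code.evaln_mono (le_max_left _ _) hv⟩
    · exact evalnOk_iff.1 (evalnOk_mono (le_max_right _ _) hk₂) x hx

/-- prefix sums -/
def prefSumL (l : List ℕ) (i : ℕ) : ℕ := ((List.range (i + 1)).map fun j => l.getD j 0).sum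

/-- reconstruction of `Denumerable.raise' l 0` by primitive recursive means -/
def raiseAt (l : List ℕ) : List ℕ := (List.range l.length).map fun i => prefSumL l i + i

lemma prefSumL_cons (a : ℕ) (l : List ℕ) (i : ℕ) :
    prefSumL (a :: l) (i + 1) = a + prefSumL l i := by
  simp only [prefSumL]
  rw [List.range_succ_eq_map]
  simp [List.map_map, Function.comp_def, List.sum_cons]

lemma prefSumL_zero (a : ℕ) (l : List ℕ) : prefSumL (a :: l) 0 = a := by
  simp only [prefSumL]
  rw [show List.range 1 = [0] from rfl]
  simp

lemma raiseAt_aux : ∀ (l : List ℕ) (n : ℕ),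
    ((List.range l.length).map fun i => prefSumL l i + n + i) = Denumerable.raise' l n
  | [], _ => by simp [Denumerable.raise']
  | a :: l, n => by
    rw [Denumerable.raise']
    rw [List.length_cons, List.range_succ_eq_map]
    simp only [List.map_cons, List.map_map, Function.comp_def, prefSumL_zero, prefSumL_cons]
    rw [← raiseAt_aux l (a + n + 1)]
    congr 1
    apply List.map_congr_left
    intro i _
    omega

lemma raiseAt_eq (l : List ℕ) : raiseAt l = Denumerable.raise' l 0 := by
  rw [← raiseAt_aux l 0]
  simp [raiseAt]

/-- a list enumerating the elements of a finset, computably w.r.t. the encoding -/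
def sortList (F : Finset ℕ) : List ℕ := raiseAt (ofNat (List ℕ) (encP F))

lemma mem_sortList {m : ℕ} {F : Finset ℕ} : m ∈ sortList F ↔ m ∈ F := by
  have h1 : decP (Finset ℕ) (encP F) = some F := decP_encP F
  have h2 : decP (Finset ℕ) (encP F) =
      some (Finset.map (Denumerable.eqv ℕ).symm.toEmbedding
        (Denumerable.raise'Finset (ofNat (List ℕ) (encP F)) 0)) := rfl
  rw [h1] at h2
  conv_rhs => rw [Option.some.inj h2]
  rw [sortList, raiseAt_eq]
  simp [Finset.mem_map, Denumerable.raise'Finset, Denumerable.eqv, Finset.mem_mk, Multiset.mem_coe]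
  exact Iff.rfl

end UQV

namespace UQV
open Encodable Denumerable Nat.Partrec

def certCheck (c : Code) (A : Finset ℕ) (x : ℕ) (q : Finset ℕ × List (List ℕ) × ℕ) : Bool :=
  evalnOk c q.2.2 q.2.1 && subB (sortList A) (iterL q.2.1 q.2.2 (x :: sortList q.1))

def gFun (c : Code) (A : Finset ℕ) (p : ℕ × ℕ) : Option (Finset ℕ) :=
  (decP (Finset ℕ × List (List ℕ) × ℕ) p.2).bind fun q =>
    bif certCheck c A p.1 q then some q.1 else none

section prim
open Primrec

lemma memB_prim : Primrec₂ memB :=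
  (list_foldr (snd (α := ℕ) (β := List ℕ)) (const false)
    (((dom_bool₂ (· || ·)).comp
        (Primrec.eq.comp (fst.comp fst) (fst.comp snd)).decide
        (snd.comp snd)).to₂)).to₂

lemma subB_prim : Primrec₂ subB :=
  (list_foldr (fst (α := List ℕ) (β := List ℕ)) (const true)
    (((dom_bool₂ (· && ·)).comp
        (memB_prim.comp (fst.comp snd) (snd.comp fst))
        (snd.comp snd)).to₂)).to₂

lemma ruleHead_prim : Primrec₂ ruleHead :=
  (list_casesOn (snd (α := List ℕ) (β := List ℕ)) (const [])
    ((Primrec.cond (subB_prim.comp (snd.comp snd) (fst.comp fst))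
        (list_cons.comp (fst.comp snd) (const []))
        (const [])).to₂)).to₂

lemma stepL_prim : Primrec₂ stepL :=
  (list_append.comp snd
    (list_flatMap (fst (α := List (List ℕ)) (β := List ℕ))
      ((ruleHead_prim.comp (snd.comp fst) snd).to₂))).to₂

lemma iterL_prim : Primrec fun p : List (List ℕ) × ℕ × List ℕ => iterL p.1 p.2.1 p.2.2 := by
  have h := nat_rec' (f := fun p : List (List ℕ) × ℕ × List ℕ => p.2.1)
      (g := fun p : List (List ℕ) × ℕ × List ℕ => p.2.2)
      (h := fun p q => stepL p.1 q.2)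
      (fst.comp snd) (snd.comp snd) ((stepL_prim.comp (fst.comp fst) (snd.comp snd)).to₂)
  exact h.of_eq fun p => rfl

lemma encP_prim {α : Type*} [Primcodable α] : Primrec (encP (α := α)) := Primrec.encode

lemma evalnOk_prim (c : Code) : Primrec₂ (evalnOk c) :=
  (list_foldr (snd (α := ℕ) (β := List (List ℕ))) (const true)
    (((dom_bool₂ (· && ·)).comp
        (option_isSome.comp
          (Code.primrec_evaln.comp
            (((fst.comp fst).pair (const c)).pair (encP_prim.comp (fst.comp snd)))))
        (snd.comp snd)).to₂)).to₂

lemma sum_prim : Primrec (List.sum : List ℕ → ℕ) :=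
  (list_foldr Primrec.id (const 0) ((nat_add.comp (fst.comp snd) (snd.comp snd)).to₂)).of_eq
    fun l => rfl

lemma prefSumL_prim : Primrec₂ prefSumL :=
  (sum_prim.comp
    (list_map (list_range.comp (succ.comp snd))
      (((list_getD 0).comp (fst.comp fst) snd).to₂))).to₂

lemma raiseAt_prim : Primrec raiseAt :=
  list_map (list_range.comp list_length)
    ((nat_add.comp (prefSumL_prim.comp fst snd) snd).to₂)

lemma sortList_prim : Primrec sortList :=
  raiseAt_prim.comp ((Primrec.ofNat (List ℕ)).comp encP_prim)

lemma certCheck_prim (c : Code) (A : Finset ℕ) : Primrec₂ (certCheck c A) :=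
  ((dom_bool₂ (· && ·)).comp
    ((evalnOk_prim c).comp (snd.comp (snd.comp snd)) (fst.comp (snd.comp snd)))
    (subB_prim.comp (const (sortList A))
      (iterL_prim.comp
        ((fst.comp (snd.comp snd)).pair
          ((snd.comp (snd.comp snd)).pair
            (list_cons.comp fst (sortList_prim.comp (fst.comp snd)))))))).to₂

lemma gFun_prim (c : Code) (A : Finset ℕ) : Primrec (gFun c A) :=
  option_bind (Primrec.decode.comp snd)
    ((Primrec.cond ((certCheck_prim c A).comp (fst.comp fst) snd)
        (option_some.comp (fst.comp snd))
        (const none)).to₂)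

lemma gFun_computable (c : Code) (A : Finset ℕ) : Computable (gFun c A) :=
  (gFun_prim c A).to_comp

end prim
end UQV

open UQV in
/-- Uniform version: if `Set.univ` is finitely presented in `QV S`, one single
computable `g` witnesses `Xᶜ ≤ₑ^g X` for every maximal `X ≠ Set.univ`. -/
theorem uniform_compl_enumRed_of_maximal (S : Set (List ℕ))
    (hne : ∀ l ∈ S, l ≠ []) (hS : REPred (· ∈ S))
    (A : Finset ℕ) (hA : QVclosure S ↑A = Set.univ) :
    ∃ g : ℕ × ℕ → Option (Finset ℕ), Computable g ∧
      ∀ X : Set ℕ, QVMaximal S X → X ≠ Set.univ → EnumRedVia Xᶜ X g := by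
  obtain ⟨c, hc⟩ := code_spec hS
  refine ⟨gFun c A, gFun_computable c A, ?_⟩
  intro X hmax hXuniv
  refine ⟨gFun_computable c A, fun x => ?_⟩
  constructor
  · intro hx
    have hxX : x ∉ X := hx
    have hcl : QVclosure S (X ∪ {x}) = Set.univ := by
      rcases hmax.2 _ QVclosure_mem
          (subset_trans Set.subset_union_left mem_QVclosure_self) with h | h
      · exact absurd (h ▸ mem_QVclosure_self (Set.mem_union_right _ (Set.mem_singleton x))) hxX
      · exact h
    have hder : ∀ a ∈ sortList A, Deriv S (X ∪ {x}) a := fun a _ =>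
      closure_subset_deriv (hcl ▸ Set.mem_univ a)
    obtain ⟨E, L, k₀, hE, hL, hiter⟩ := derivs_cert _ hder
    obtain ⟨k₁, hk₁⟩ := evalnOk_exists hc hL
    set F : Finset ℕ := E.toFinset.erase x with hFdef
    have hFX : ↑F ⊆ X := by
      intro m hm
      have hm' : m ∈ E ∧ ¬ m = x := by
        simpa [hFdef, Finset.mem_erase, List.mem_toFinset] using hm
      rcases hE m hm'.1 with h | h
      · exact h
      · exact absurd (by simpa using h) hm'.2
    have hEsub : ∀ m ∈ E, m ∈ x :: sortList F := by
      intro m hm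
      by_cases hmx : m = x
      · simp [hmx]
      · exact List.mem_cons.2 (Or.inr (mem_sortList.2 (by
          simp [hFdef, Finset.mem_erase, List.mem_toFinset, hmx, hm])))
    refine ⟨encP (F, L, max k₀ k₁), F, ?_, hFX⟩
    have hcert : certCheck c A x (F, L, max k₀ k₁) = true := by
      have h1 : evalnOk c (max k₀ k₁) L = true := evalnOk_mono (le_max_right _ _) hk₁
      have h2 : subB (sortList A) (iterL L (max k₀ k₁) (x :: sortList F)) = true := by
        rw [subB_iff]
        intro a ha
        exact iterL_mono (le_max_left _ _) (fun l hl => hl) hEsub a (hiter a ha)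
      simp [certCheck, h1, h2]
    show gFun c A (x, encP (F, L, max k₀ k₁)) = some F
    rw [gFun]
    simp [decP_encP, hcert]
  · rintro ⟨n, F, hgn, hFX⟩
    intro hxX
    rw [gFun] at hgn
    cases hdec : decP (Finset ℕ × List (List ℕ) × ℕ) n with
    | none => rw [hdec] at hgn; simp at hgn
    | some q =>
      rw [hdec] at hgn
      simp only [Option.bind_some] at hgn
      cases hcert : certCheck c A x q with
      | false => simp [hcert] at hgn
      | true =>
        simp [hcert] at hgn
        subst hgn
        obtain ⟨h1, h2⟩ := Bool.and_eq_true_iff.1 hcert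
        have hLS : ∀ l ∈ q.2.1, l ∈ S := fun l hl =>
          (hc l).2 ⟨q.2.2, evalnOk_iff.1 h1 l hl⟩
        have hstart : ∀ m ∈ x :: sortList q.1, m ∈ X := by
          intro m hm
          rcases List.mem_cons.1 hm with rfl | hm
          · exact hxX
          · exact hFX (mem_sortList.1 hm)
        have hAX : (↑A : Set ℕ) ⊆ X := by
          intro a ha
          exact iterL_sound hmax.1 hLS hstart q.2.2 a
            (subB_iff.1 h2 a (mem_sortList.2 ha))
        have : Set.univ ⊆ X := hA ▸ QVclosure_le hmax.1 hAX
        exact hXuniv (Set.eq_univ_of_univ_subset this)
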